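/- arXiv:1404.2954 — 2 statements merged into one kernel-verified Lean document; each statement's English description precedes it below -/
import Mathlib

section
/- The synergy value χ satisfies Normalized-Synergy: for every game (N,v), the synergies of all coalitions sum to zero, i.e., Σ_{C⊆N} χ^N_v(C) = 0. -/
open Finset

/-- The marginal contribution of player `i` to coalition `C` in a game with
characteristic function `v`: `MC^C_i(N,v) = v(C ∪ {i}) − v(C)`. -/
noncomputable def MC (v : Finset ℕ → ℝ) (C : Finset ℕ) (i : ℕ) : ℝ :=
  v (insert i C) - v C

/-- The Shapley value of player `i` in the game with player set `N` and
characteristic function `v`. -/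
noncomputable def shapley (N : Finset ℕ) (v : Finset ℕ → ℝ) (i : ℕ) : ℝ :=
  ∑ C ∈ (N.erase i).powerset,
    ((C.card.factorial : ℝ) * ((N.card - C.card - 1).factorial : ℝ) /
      (N.card.factorial : ℝ)) * (v (insert i C) - v C)

/-- The average Shapley value `φ̄_i(N,v) = 2^{1−n} Σ_{C ⊆ N, i ∈ C} φ_i(C,v)`. -/
noncomputable def avgShapley (N : Finset ℕ) (v : Finset ℕ → ℝ) (i : ℕ) : ℝ :=
  (2 / 2 ^ N.card : ℝ) * ∑ C ∈ N.powerset.filter (fun C => i ∈ C), shapley C v i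

/-- The synergy value `χ^N_v(C) = v(C) − Σ_{i ∈ C} φ̄_i(N,v)`. -/
noncomputable def synergyValue (N : Finset ℕ) (v : Finset ℕ → ℝ) (C : Finset ℕ) : ℝ :=
  v C - ∑ i ∈ C, avgShapley N v i

/-- Players `i` and `j` are symmetric in the game `(N,v)`. -/
def IsSymmetric (N : Finset ℕ) (v : Finset ℕ → ℝ) (i j : ℕ) : Prop :=
  i ∈ N ∧ j ∈ N ∧ ∀ C ⊆ N \ {i, j}, v (insert i C) = v (insert j C)

/-- Player `i` is a null player in the game `(N,v)`. -/
def IsNullPlayer (N : Finset ℕ) (v : Finset ℕ → ℝ) (i : ℕ) : Prop :=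
  i ∈ N ∧ ∀ C ⊆ N, v (insert i C) = v C

/-- Player `i` is a dummy player in the game `(N,v)`. -/
def IsDummyPlayer (N : Finset ℕ) (v : Finset ℕ → ℝ) (i : ℕ) : Prop :=
  i ∈ N ∧ ∀ C ⊆ N \ {i}, v (insert i C) = v C + v {i}

/-- A game of dummies: every player is a dummy player. -/
def GameOfDummies (N : Finset ℕ) (v : Finset ℕ → ℝ) : Prop :=
  ∀ i ∈ N, IsDummyPlayer N v i


/-! ### Auxiliary lemmas -/

noncomputable def shapleyW (n k : ℕ) : ℝ :=
  (k.factorial : ℝ) * ((n - k - 1).factorial : ℝ) / (n.factorial : ℝ)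

lemma swap_mem_aux (N : Finset ℕ) (f : ℕ → Finset ℕ → ℝ) :
    ∑ i ∈ N, ∑ C ∈ N.powerset.filter (fun C => i ∈ C), f i C
      = ∑ C ∈ N.powerset, ∑ i ∈ C, f i C := by
  simp_rw [Finset.sum_filter]
  rw [Finset.sum_comm]
  refine Finset.sum_congr rfl fun C hC => ?_
  rw [← Finset.sum_filter]
  congr 1
  rw [Finset.filter_mem_eq_inter, Finset.inter_eq_right]
  exact Finset.mem_powerset.mp hC

lemma erase_pow_aux (N : Finset ℕ) (i : ℕ) :
    (N.erase i).powerset = N.powerset.filter (fun C => i ∉ C) := by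
  ext C; simp [Finset.subset_erase, and_comm]

lemma swap_notmem_aux (N : Finset ℕ) (f : ℕ → Finset ℕ → ℝ) :
    ∑ i ∈ N, ∑ C ∈ (N.erase i).powerset, f i C
      = ∑ C ∈ N.powerset, ∑ i ∈ N \ C, f i C := by
  simp_rw [erase_pow_aux, Finset.sum_filter]
  rw [Finset.sum_comm]
  refine Finset.sum_congr rfl fun C hC => ?_
  rw [← Finset.sum_filter]
  congr 1
  exact (Finset.sdiff_eq_filter N C).symm

lemma reindexA_aux (N : Finset ℕ) (v : Finset ℕ → ℝ) (i : ℕ) (hi : i ∈ N) :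
    ∑ C ∈ (N.erase i).powerset, shapleyW N.card C.card * v (insert i C)
      = ∑ S ∈ N.powerset.filter (fun S => i ∈ S), shapleyW N.card (S.card - 1) * v S := by
  refine Finset.sum_bij' (fun C _ => insert i C) (fun S _ => S.erase i) ?_ ?_ ?_ ?_ ?_
  · intro C hC
    simp only [Finset.mem_filter, Finset.mem_powerset] at *
    exact ⟨Finset.insert_subset hi (hC.trans
      (Finset.erase_subset _ _)), Finset.mem_insert_self _ _⟩
  · intro S hS
    simp only [Finset.mem_filter, Finset.mem_powerset] at hS
    exact Finset.mem_powerset.mpr (Finset.erase_subset_erase _ hS.1)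
  · intro C hC
    have : i ∉ C := fun h => Finset.notMem_erase i N (Finset.mem_powerset.mp hC h)
    exact Finset.erase_insert this
  · intro S hS
    simp only [Finset.mem_filter] at hS
    exact Finset.insert_erase hS.2
  · intro C hC
    have hiC : i ∉ C := fun h => Finset.notMem_erase i N (Finset.mem_powerset.mp hC h)
    rw [Finset.card_insert_of_notMem hiC]
    simp

lemma coeff_zero_aux (n k : ℕ) (h1 : 1 ≤ k) (h2 : k < n) :
    (k : ℝ) * shapleyW n (k - 1) = ((n - k : ℕ) : ℝ) * shapleyW n k := by
  unfold shapleyW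
  have e1 : n - (k - 1) - 1 = n - k := by omega
  rw [e1]
  rw [mul_div_assoc', mul_div_assoc']
  congr 1
  have key : k * ((k - 1).factorial * (n - k).factorial)
      = (n - k) * (k.factorial * (n - k - 1).factorial) := by
    rw [← mul_assoc, Nat.mul_factorial_pred (by omega), mul_left_comm,
      Nat.mul_factorial_pred (by omega)]
    try ring
  exact_mod_cast key

lemma coeff_top_aux (n : ℕ) (hn : 0 < n) : (n : ℝ) * shapleyW n (n - 1) = 1 := by
  unfold shapleyW
  have e : n - (n - 1) - 1 = 0 := by omega
  rw [e]
  have hfac : (n : ℝ) * ((n - 1).factorial : ℝ) = (n.factorial : ℝ) := by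
    exact_mod_cast Nat.mul_factorial_pred hn.ne'
  have hne : (n.factorial : ℝ) ≠ 0 := Nat.cast_ne_zero.mpr n.factorial_ne_zero
  field_simp [Nat.factorial]
  rw [Nat.factorial_zero, Nat.cast_one, mul_one, hfac]
  try linarith [hfac]

lemma shapley_eff_aux (N : Finset ℕ) (v : Finset ℕ → ℝ) (hv : v ∅ = 0) :
    ∑ i ∈ N, shapley N v i = v N := by
  have h1 : ∀ i ∈ N, shapley N v i
      = (∑ C ∈ (N.erase i).powerset, shapleyW N.card C.card * v (insert i C))
        - ∑ C ∈ (N.erase i).powerset, shapleyW N.card C.card * v C := by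
    intro i hi
    unfold shapley shapleyW
    rw [← Finset.sum_sub_distrib]
    exact Finset.sum_congr rfl fun C _ => by ring
  rw [Finset.sum_congr rfl h1, Finset.sum_sub_distrib]
  have hA : ∑ i ∈ N, ∑ C ∈ (N.erase i).powerset, shapleyW N.card C.card * v (insert i C)
      = ∑ S ∈ N.powerset, (S.card : ℝ) * (shapleyW N.card (S.card - 1) * v S) := by
    rw [Finset.sum_congr rfl (fun i hi => reindexA_aux N v i hi), swap_mem_aux]
    exact Finset.sum_congr rfl fun S _ => by rw [Finset.sum_const, nsmul_eq_mul]
  have hB : ∑ i ∈ N, ∑ C ∈ (N.erase i).powerset, shapleyW N.card C.card * v C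
      = ∑ S ∈ N.powerset, ((N.card - S.card : ℕ) : ℝ) * (shapleyW N.card S.card * v S) := by
    rw [swap_notmem_aux]
    refine Finset.sum_congr rfl fun S hS => ?_
    rw [Finset.sum_const, nsmul_eq_mul, Finset.card_sdiff_of_subset (Finset.mem_powerset.mp hS)]
  rw [hA, hB, ← Finset.sum_sub_distrib]
  have hterm : ∀ S ∈ N.powerset,
      (S.card : ℝ) * (shapleyW N.card (S.card - 1) * v S)
        - ((N.card - S.card : ℕ) : ℝ) * (shapleyW N.card S.card * v S)
      = if S = N then v N else 0 := by
    intro S hS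
    by_cases hSN : S = N
    · subst hSN
      rw [if_pos rfl, Nat.sub_self, Nat.cast_zero, zero_mul, sub_zero]
      rcases Nat.eq_zero_or_pos S.card with h0 | hpos
      · have hS0 : S = ∅ := Finset.card_eq_zero.mp h0
        subst hS0
        simp [hv]
      · rw [← mul_assoc, coeff_top_aux S.card hpos, one_mul]
    · rw [if_neg hSN]
      rcases Nat.eq_zero_or_pos S.card with h0 | hpos
      · rw [Finset.card_eq_zero.mp h0, hv]
        ring
      · have hlt : S.card < N.card :=
          Finset.card_lt_card (lt_of_le_of_ne (Finset.mem_powerset.mp hS) hSN)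
        have h := coeff_zero_aux N.card S.card hpos hlt
        rw [← mul_assoc, ← mul_assoc, h]
        ring
  rw [Finset.sum_congr rfl hterm, Finset.sum_ite_eq' N.powerset N (fun _ => v N)]
  rw [if_pos (Finset.mem_powerset.mpr (Finset.Subset.refl N))]

lemma card_filter_mem_aux (N : Finset ℕ) (i : ℕ) (hi : i ∈ N) :
    (N.powerset.filter (fun C => i ∈ C)).card = 2 ^ (N.card - 1) := by
  rw [← Finset.card_erase_of_mem hi, ← Finset.card_powerset]
  refine (Finset.card_bij' (fun C _ => insert i C) (fun S _ => S.erase i) ?_ ?_ ?_ ?_).symm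
  · intro C hC
    simp only [Finset.mem_filter, Finset.mem_powerset]
    exact ⟨Finset.insert_subset hi ((Finset.mem_powerset.mp hC).trans
      (Finset.erase_subset _ _)), Finset.mem_insert_self _ _⟩
  · intro S hS
    simp only [Finset.mem_filter, Finset.mem_powerset] at hS
    exact Finset.mem_powerset.mpr (Finset.erase_subset_erase _ hS.1)
  · intro C hC
    have : i ∉ C := fun h => Finset.notMem_erase i N (Finset.mem_powerset.mp hC h)
    exact Finset.erase_insert this
  · intro S hS
    simp only [Finset.mem_filter] at hS
    exact Finset.insert_erase hS.2

/-- the synergy value satisfies Normalized-Synergy (P8):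
the synergies of all coalitions of `N` sum to zero. -/
theorem synergyValue_normalized_synergy (N : Finset ℕ) (v : Finset ℕ → ℝ)
    (hv : v ∅ = 0) :
    ∑ C ∈ N.powerset, synergyValue N v C = 0 := by
  unfold synergyValue
  rw [Finset.sum_sub_distrib]
  have key : ∑ C ∈ N.powerset, ∑ i ∈ C, avgShapley N v i = ∑ C ∈ N.powerset, v C := by
    rw [← swap_mem_aux]
    have step : ∀ i ∈ N, ∑ C ∈ N.powerset.filter (fun C => i ∈ C), avgShapley N v i
        = ∑ C ∈ N.powerset.filter (fun C => i ∈ C), shapley C v i := by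
      intro i hi
      rw [Finset.sum_const, card_filter_mem_aux N i hi, nsmul_eq_mul]
      unfold avgShapley
      rw [← mul_assoc]
      have hpos : 0 < N.card := Finset.card_pos.mpr ⟨i, hi⟩
      have hpow : ((2 ^ (N.card - 1) : ℕ) : ℝ) * (2 / 2 ^ N.card) = 1 := by
        have he : N.card - 1 + 1 = N.card := Nat.succ_pred_eq_of_pos hpos
        push_cast
        rw [← he, pow_succ]
        field_simp
        rw [Nat.add_sub_cancel]
      rw [hpow, one_mul]
    rw [Finset.sum_congr rfl step, swap_mem_aux]
    exact Finset.sum_congr rfl fun C _ => shapley_eff_aux C v hv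
  rw [key, sub_self]
end

section
/- The Average-Impact value λ, defined by λ^N_v(i) = φ̄_i(N,v), is the unique measure of average impact satisfying all of the following three properties. (P11, Symmetric-Impact): for every game (N,v) and every pair of symmetric players i,j in (N,v), θ^N_v(i) = θ^N_v(j). (P12, Average-Value): for every game (N,v) with |N| = n, (1/2) Σ_{i∈N} θ^N_v(i) = 2^{−n} Σ_{C⊆N} v(C). (P13, Marginal-Impact): for every pair of games (N,v) and (N,w) on the same player set and every player i ∈ N, if MC^C_i(N,v) = MC^C_i(N,w) for all C ⊆ N\{i}, then θ^N_v(i) = θ^N_w(i). That is: λ satisfies P11, P12 and P13, and any measure of average impact θ satisfying these three properties equals λ on every game and every player. -/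
open Finset

/-- P11 (Symmetric-Impact). -/
def SymmetricImpact (θ : Finset ℕ → (Finset ℕ → ℝ) → ℕ → ℝ) : Prop :=
  ∀ (N : Finset ℕ) (v : Finset ℕ → ℝ), v ∅ = 0 →
    ∀ i j : ℕ, IsSymmetric N v i j → θ N v i = θ N v j

/-- P12 (Average-Value). -/
def AverageValue (θ : Finset ℕ → (Finset ℕ → ℝ) → ℕ → ℝ) : Prop :=
  ∀ (N : Finset ℕ) (v : Finset ℕ → ℝ), v ∅ = 0 →
    (1 / 2 : ℝ) * ∑ i ∈ N, θ N v i = (1 / 2 ^ N.card : ℝ) * ∑ C ∈ N.powerset, v C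

/-- P13 (Marginal-Impact). -/
def MarginalImpact (θ : Finset ℕ → (Finset ℕ → ℝ) → ℕ → ℝ) : Prop :=
  ∀ (N : Finset ℕ) (v w : Finset ℕ → ℝ), v ∅ = 0 → w ∅ = 0 → ∀ i ∈ N,
    (∀ C ⊆ N \ {i}, MC v C i = MC w C i) → θ N v i = θ N w i



noncomputable def uGame (T : Finset ℕ) : Finset ℕ → ℝ := fun C => if T ⊆ C then 1 else 0

noncomputable def linGame (F : Finset (Finset ℕ)) (c : Finset ℕ → ℝ) : Finset ℕ → ℝ :=
  fun C => ∑ T ∈ F, c T * uGame T C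

noncomputable def dividend (v : Finset ℕ → ℝ) (T : Finset ℕ) : ℝ :=
  ∑ S ∈ T.powerset, (-1 : ℝ) ^ (T.card - S.card) * v S

lemma sum_pow_neg_one_real (x : Finset ℕ) :
    (∑ m ∈ x.powerset, (-1 : ℝ) ^ m.card) = if x = ∅ then 1 else 0 := by
  have := @Finset.sum_powerset_neg_one_pow_card ℕ _ x
  have h2 : ((∑ m ∈ x.powerset, (-1 : ℤ) ^ m.card : ℤ) : ℝ)
      = ∑ m ∈ x.powerset, (-1 : ℝ) ^ m.card := by push_cast; ring_nf
  rw [← h2, this]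
  split <;> simp

lemma mobius (v : Finset ℕ → ℝ) (C : Finset ℕ) :
    ∑ T ∈ C.powerset, dividend v T = v C := by
  unfold dividend
  rw [Finset.sum_comm' (s' := fun S => C.powerset.filter (fun T => S ⊆ T)) (t' := C.powerset)
    (h := by
      intro T S
      simp only [mem_powerset, mem_filter, mem_powerset]
      constructor
      · rintro ⟨h1, h2⟩; exact ⟨⟨h1, h2⟩, h2.trans h1⟩
      · rintro ⟨⟨h1, h2⟩, h3⟩; exact ⟨h1, h2⟩)]
  have key : ∀ S ∈ C.powerset,
      (∑ T ∈ C.powerset.filter (fun T => S ⊆ T), (-1:ℝ) ^ (T.card - S.card) * v S)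
        = (if S = C then 1 else 0) * v S := by
    intro S hS
    rw [mem_powerset] at hS
    rw [← Finset.sum_mul]
    congr 1
    have step : (∑ T ∈ C.powerset.filter (fun T => S ⊆ T), (-1:ℝ) ^ (T.card - S.card))
        = ∑ U ∈ (C \ S).powerset, (-1:ℝ) ^ U.card := by
      refine Finset.sum_nbij' (i := fun T => T \ S) (j := fun U => S ∪ U) ?_ ?_ ?_ ?_ ?_
      · intro T hT; simp only [mem_filter, mem_powerset] at hT ⊢
        exact fun x hx => mem_sdiff.mpr ⟨hT.1 (mem_sdiff.mp hx).1, (mem_sdiff.mp hx).2⟩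
      · intro U hU; simp only [mem_powerset, mem_filter, mem_powerset] at hU ⊢
        exact ⟨union_subset hS (fun x hx => (mem_sdiff.mp (hU hx)).1), subset_union_left⟩
      · intro T hT; simp only [mem_filter, mem_powerset] at hT
        exact Finset.union_sdiff_of_subset hT.2
      · intro U hU; simp only [mem_powerset] at hU
        show (S ∪ U) \ S = U
        rw [Finset.union_sdiff_cancel_left]
        rw [Finset.disjoint_left]
        intro a ha haU
        exact (mem_sdiff.mp (hU haU)).2 ha
      · intro T hT; simp only [mem_filter, mem_powerset] at hT
        rw [card_sdiff_of_subset hT.2]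
    rw [step, sum_pow_neg_one_real]
    by_cases h : S = C
    · subst h; simp
    · have hne : ¬ (C \ S = ∅) := by
        rw [sdiff_eq_empty_iff_subset]
        exact fun hc => h (Finset.Subset.antisymm hS hc)
      rw [if_neg h, if_neg hne]
  rw [Finset.sum_congr rfl key]
  simp [ite_mul]

noncomputable def gam (n k : ℕ) : ℝ :=
  (k.factorial : ℝ) * ((n - k - 1).factorial : ℝ) / (n.factorial : ℝ)

lemma erase_powerset_eq (M : Finset ℕ) (i : ℕ) :
    (M.erase i).powerset = M.powerset.filter (fun B => i ∉ B) := by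
  ext B
  simp only [mem_powerset, mem_filter, subset_erase]

lemma shapley_split (M : Finset ℕ) (v : Finset ℕ → ℝ) (i : ℕ) (hi : i ∈ M) :
    shapley M v i =
      (∑ S ∈ M.powerset.filter (fun S => i ∈ S), gam M.card (S.card - 1) * v S)
      - ∑ B ∈ M.powerset.filter (fun B => i ∉ B), gam M.card B.card * v B := by
  unfold shapley
  simp only [mul_sub]
  rw [Finset.sum_sub_distrib]
  congr 1
  · refine Finset.sum_nbij' (i := fun B => insert i B) (j := fun S => S.erase i) ?_ ?_ ?_ ?_ ?_
    · intro B hB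
      simp only [mem_powerset, subset_erase] at hB
      simp only [mem_filter, mem_powerset]
      exact ⟨insert_subset hi hB.1, mem_insert_self i B⟩
    · intro S hS
      simp only [mem_filter, mem_powerset] at hS
      simp only [mem_powerset, subset_erase]
      exact ⟨(erase_subset _ _).trans hS.1, notMem_erase i S⟩
    · intro B hB
      simp only [mem_powerset, subset_erase] at hB
      exact erase_insert (by exact hB.2)
    · intro S hS
      simp only [mem_filter, mem_powerset] at hS
      exact insert_erase hS.2
    · intro B hB
      simp only [mem_powerset, subset_erase] at hB
      have hcard : (insert i B).card = B.card + 1 := card_insert_of_notMem hB.2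
      rw [hcard]
      simp only [Nat.add_sub_cancel, gam]
  · rw [erase_powerset_eq]
    rfl

lemma shapley_eff (M : Finset ℕ) (v : Finset ℕ → ℝ) (h0 : v ∅ = 0) :
    ∑ i ∈ M, shapley M v i = v M := by
  set n := M.card with hn
  rw [Finset.sum_congr rfl (fun i hi => shapley_split M v i hi)]
  rw [Finset.sum_sub_distrib]
  have hA : ∑ i ∈ M, ∑ S ∈ M.powerset.filter (fun S => i ∈ S), gam n (S.card - 1) * v S
      = ∑ S ∈ M.powerset, (S.card : ℝ) * (gam n (S.card - 1) * v S) := by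
    rw [Finset.sum_comm' (t' := M.powerset) (s' := fun S => S) (h := by
      intro i S
      simp only [mem_filter, mem_powerset]
      constructor
      · rintro ⟨h1, h2, h3⟩; exact ⟨h3, h2⟩
      · rintro ⟨h1, h2⟩; exact ⟨h2 h1, h2, h1⟩)]
    refine Finset.sum_congr rfl fun S hS => ?_
    rw [Finset.sum_const, nsmul_eq_mul]
  have hB : ∑ i ∈ M, ∑ B ∈ M.powerset.filter (fun B => i ∉ B), gam n B.card * v B
      = ∑ B ∈ M.powerset, ((n - B.card : ℕ) : ℝ) * (gam n B.card * v B) := by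
    rw [Finset.sum_comm' (t' := M.powerset) (s' := fun B => M \ B) (h := by
      intro i B
      simp only [mem_filter, mem_powerset, mem_sdiff]
      constructor
      · rintro ⟨h1, h2, h3⟩; exact ⟨⟨h1, h3⟩, h2⟩
      · rintro ⟨⟨h1, h2⟩, h3⟩; exact ⟨h1, h3, h2⟩)]
    refine Finset.sum_congr rfl fun B hB => ?_
    rw [Finset.sum_const, nsmul_eq_mul, card_sdiff_of_subset (mem_powerset.mp hB), hn]
  rw [hA, hB, ← Finset.sum_sub_distrib]
  have key : ∀ S ∈ M.powerset,
      (S.card : ℝ) * (gam n (S.card - 1) * v S) - ((n - S.card : ℕ) : ℝ) * (gam n S.card * v S)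
        = if S = M then v M else 0 := by
    intro S hS
    rw [mem_powerset] at hS
    by_cases hSM : S = M
    · subst hSM
      rw [if_pos rfl, Nat.sub_self]
      by_cases hz : n = 0
      · have hc : S.card = 0 := by omega
        have : S = ∅ := card_eq_zero.mp hc
        simp [this, h0]
      · have hn0 : 0 < n := Nat.pos_of_ne_zero hz
        have hfac : (n : ℝ) * ((n - 1).factorial : ℝ) = (n.factorial : ℝ) := by
          exact_mod_cast congrArg (Nat.cast : ℕ → ℝ) (Nat.mul_factorial_pred hn0.ne')
        have hne : (n.factorial : ℝ) ≠ 0 := Nat.cast_ne_zero.mpr n.factorial_ne_zero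
        have hsub : n - (n - 1) - 1 = 0 := by omega
        unfold gam
        rw [hsub, ← hn]
        simp only [Nat.factorial_zero, Nat.cast_zero, Nat.cast_one, mul_one, zero_mul, sub_zero]
        field_simp
        linear_combination v S * hfac
    · rw [if_neg hSM]
      by_cases hS0 : S.card = 0
      · have : S = ∅ := card_eq_zero.mp hS0
        subst this
        simp [h0]
      · have hs1 : 1 ≤ S.card := Nat.one_le_iff_ne_zero.mpr hS0
        have hslt : S.card < n := by
          rw [hn]; exact card_lt_card (ssubset_of_subset_of_ne hS hSM)
        have hsub : n - (S.card - 1) - 1 = n - S.card := by omega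
        have keyn : S.card * ((S.card - 1).factorial * (n - S.card).factorial)
            = (n - S.card) * (S.card.factorial * (n - S.card - 1).factorial) := by
          have e1 : S.card * (S.card - 1).factorial = S.card.factorial :=
            Nat.mul_factorial_pred (by omega)
          have e2 : (n - S.card) * (n - S.card - 1).factorial = (n - S.card).factorial :=
            Nat.mul_factorial_pred (by omega)
          rw [← e1, ← e2]
          ring
        have keyr : (S.card : ℝ) * (((S.card - 1).factorial : ℝ) * ((n - S.card).factorial : ℝ))
            = ((n - S.card : ℕ) : ℝ) * ((S.card.factorial : ℝ) * ((n - S.card - 1).factorial : ℝ)) := by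
          exact_mod_cast congrArg (Nat.cast : ℕ → ℝ) keyn
        unfold gam
        rw [hsub]
        linear_combination (v S / (n.factorial : ℝ)) * keyr
  rw [Finset.sum_congr rfl key]
  simp

section Swap

variable (i j : ℕ)

lemma image_swap_of_not_mem {D : Finset ℕ} (hi : i ∉ D) (hj : j ∉ D) :
    D.image (Equiv.swap i j) = D := by
  have : ∀ x ∈ D, Equiv.swap i j x = id x := by
    intro x hx
    exact Equiv.swap_apply_of_ne_of_ne (fun h => hi (h ▸ hx)) (fun h => hj (h ▸ hx))
  rw [Finset.image_congr this, Finset.image_id]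

lemma image_swap_subset {N C : Finset ℕ} (hiN : i ∈ N) (hjN : j ∈ N) (hC : C ⊆ N) :
    C.image (Equiv.swap i j) ⊆ N := by
  intro x hx
  rw [mem_image] at hx
  obtain ⟨y, hy, rfl⟩ := hx
  rcases eq_or_ne y i with rfl | hyi
  · rwa [Equiv.swap_apply_left]
  rcases eq_or_ne y j with rfl | hyj
  · rwa [Equiv.swap_apply_right]
  · rw [Equiv.swap_apply_of_ne_of_ne hyi hyj]; exact hC hy

lemma image_swap_invol (S : Finset ℕ) :
    (S.image (Equiv.swap i j)).image (Equiv.swap i j) = S := by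
  rw [Finset.image_image]
  have : ∀ x ∈ S, (Equiv.swap i j ∘ Equiv.swap i j) x = id x := by
    intro x _; simp
  rw [Finset.image_congr this, Finset.image_id]

lemma symm_image_val {N : Finset ℕ} {v : Finset ℕ → ℝ}
    (h : IsSymmetric N v i j) {S : Finset ℕ} (hS : S ⊆ N) :
    v (S.image (Equiv.swap i j)) = v S := by
  obtain ⟨hiN, hjN, hsym⟩ := h
  rcases eq_or_ne i j with rfl | hij
  · rw [Equiv.swap_self]
    have : ∀ x ∈ S, (Equiv.refl ℕ) x = id x := fun x _ => rfl
    rw [Finset.image_congr this, Finset.image_id]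
  by_cases hi : i ∈ S <;> by_cases hj : j ∈ S
  · -- both
    have hD : ((S.erase i).erase j).image (Equiv.swap i j) = (S.erase i).erase j :=
      image_swap_of_not_mem i j (fun h => (mem_erase.mp (mem_of_mem_erase h)).1 rfl)
        (notMem_erase _ _)
    have hSrw : S = insert i (insert j ((S.erase i).erase j)) := by
      rw [insert_erase (mem_erase.mpr ⟨Ne.symm hij, hj⟩), insert_erase hi]
    rw [hSrw, Finset.image_insert, Finset.image_insert, Equiv.swap_apply_left,
      Equiv.swap_apply_right, hD, Finset.insert_comm]
  · -- i only
    have hD : (S.erase i).image (Equiv.swap i j) = S.erase i :=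
      image_swap_of_not_mem i j (notMem_erase _ _) (fun h => hj (mem_of_mem_erase h))
    have hsub : S.erase i ⊆ N \ {i, j} := by
      intro x hx
      rw [mem_sdiff, mem_insert, mem_singleton]
      refine ⟨hS (mem_of_mem_erase hx), ?_⟩
      push_neg
      exact ⟨(mem_erase.mp hx).1, fun h => hj (h ▸ mem_of_mem_erase hx)⟩
    have hSrw : S = insert i (S.erase i) := (insert_erase hi).symm
    have h1 : S.image (Equiv.swap i j) = insert j (S.erase i) := by
      conv_lhs => rw [hSrw]
      rw [Finset.image_insert, Equiv.swap_apply_left, hD]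
    rw [h1]
    conv_rhs => rw [hSrw]
    exact (hsym _ hsub).symm
  · -- j only
    have hD : (S.erase j).image (Equiv.swap i j) = S.erase j :=
      image_swap_of_not_mem i j (fun h => hi (mem_of_mem_erase h)) (notMem_erase _ _)
    have hsub : S.erase j ⊆ N \ {i, j} := by
      intro x hx
      rw [mem_sdiff, mem_insert, mem_singleton]
      refine ⟨hS (mem_of_mem_erase hx), ?_⟩
      push_neg
      exact ⟨fun h => hi (h ▸ mem_of_mem_erase hx), (mem_erase.mp hx).1⟩
    have hSrw : S = insert j (S.erase j) := (insert_erase hj).symm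
    have h1 : S.image (Equiv.swap i j) = insert i (S.erase j) := by
      conv_lhs => rw [hSrw]
      rw [Finset.image_insert, Equiv.swap_apply_right, hD]
    rw [h1]
    conv_rhs => rw [hSrw]
    exact hsym _ hsub
  · rw [image_swap_of_not_mem i j hi hj]

end Swap

lemma shapley_swap {N : Finset ℕ} {v : Finset ℕ → ℝ} {i j : ℕ}
    (h : IsSymmetric N v i j) {C : Finset ℕ} (hC : C ⊆ N) (hiC : i ∈ C) :
    shapley C v i = shapley (C.image (Equiv.swap i j)) v j := by
  have hiN := h.1
  have hjN := h.2.1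
  unfold shapley
  have hcardC : (C.image (Equiv.swap i j)).card = C.card :=
    Finset.card_image_of_injective _ (Equiv.injective _)
  have herase : (C.image (Equiv.swap i j)).erase j = (C.erase i).image (Equiv.swap i j) := by
    have h2 := Finset.image_erase (f := Equiv.swap i j) (Equiv.injective _) C i
    rw [Equiv.swap_apply_left] at h2
    exact h2.symm
  refine Finset.sum_nbij' (i := fun B => B.image (Equiv.swap i j))
    (j := fun B => B.image (Equiv.swap i j)) ?_ ?_ ?_ ?_ ?_
  · intro B hB
    rw [mem_powerset] at hB ⊢
    rw [herase]
    exact Finset.image_subset_image hB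
  · intro B hB
    rw [mem_powerset, herase] at hB
    rw [mem_powerset]
    have := Finset.image_subset_image (f := Equiv.swap i j) hB
    rwa [image_swap_invol] at this
  · intro B _; exact image_swap_invol i j B
  · intro B _; exact image_swap_invol i j B
  · intro B hB
    rw [mem_powerset] at hB
    have hBN : B ⊆ N := fun x hx => hC (mem_of_mem_erase (hB hx))
    have hBcard : (B.image (Equiv.swap i j)).card = B.card :=
      Finset.card_image_of_injective _ (Equiv.injective _)
    have hv1 : v (B.image (Equiv.swap i j)) = v B := symm_image_val i j h hBN
    have hv2 : v (insert j (B.image (Equiv.swap i j))) = v (insert i B) := by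
      have h3 : insert j (B.image (Equiv.swap i j)) = (insert i B).image (Equiv.swap i j) := by
        rw [Finset.image_insert, Equiv.swap_apply_left]
      rw [h3]
      exact symm_image_val i j h (insert_subset (hC hiC) hBN)
    rw [hcardC, hBcard, hv1, hv2]

lemma avgShapley_symm {N : Finset ℕ} {v : Finset ℕ → ℝ} {i j : ℕ}
    (h : IsSymmetric N v i j) : avgShapley N v i = avgShapley N v j := by
  have hiN := h.1
  have hjN := h.2.1
  unfold avgShapley
  congr 1
  refine Finset.sum_nbij' (i := fun C => C.image (Equiv.swap i j))
    (j := fun C => C.image (Equiv.swap i j)) ?_ ?_ ?_ ?_ ?_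
  · intro C hC
    simp only [mem_filter, mem_powerset] at hC ⊢
    refine ⟨image_swap_subset i j hiN hjN hC.1, ?_⟩
    exact mem_image.mpr ⟨i, hC.2, Equiv.swap_apply_left i j⟩
  · intro C hC
    simp only [mem_filter, mem_powerset] at hC ⊢
    refine ⟨image_swap_subset i j hiN hjN hC.1, ?_⟩
    exact mem_image.mpr ⟨j, hC.2, Equiv.swap_apply_right i j⟩
  · intro C _; exact image_swap_invol i j C
  · intro C _; exact image_swap_invol i j C
  · intro C hC
    simp only [mem_filter, mem_powerset] at hC
    exact shapley_swap h hC.1 hC.2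


lemma shapley_congr_MC {M : Finset ℕ} {v w : Finset ℕ → ℝ} {i : ℕ}
    (h : ∀ B ⊆ M.erase i, v (insert i B) - v B = w (insert i B) - w B) :
    shapley M v i = shapley M w i := by
  unfold shapley
  exact Finset.sum_congr rfl fun B hB => by rw [h B (mem_powerset.mp hB)]

lemma avgShapley_congr_MC {N : Finset ℕ} {v w : Finset ℕ → ℝ} {i : ℕ}
    (h : ∀ C ⊆ N \ {i}, MC v C i = MC w C i) :
    avgShapley N v i = avgShapley N w i := by
  unfold avgShapley
  congr 1
  refine Finset.sum_congr rfl fun C hC => ?_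
  simp only [mem_filter, mem_powerset] at hC
  refine shapley_congr_MC fun B hB => ?_
  have hBN : B ⊆ N \ {i} := by
    intro x hx
    have := hB hx
    rw [mem_erase] at this
    rw [mem_sdiff, mem_singleton]
    exact ⟨hC.1 this.2, this.1⟩
  exact h B hBN

lemma avgShapley_averageValue : AverageValue avgShapley := by
  intro N v h0
  unfold avgShapley
  rw [← Finset.mul_sum]
  have hswap : ∑ i ∈ N, ∑ C ∈ N.powerset.filter (fun C => i ∈ C), shapley C v i
      = ∑ C ∈ N.powerset, ∑ i ∈ C, shapley C v i := by
    refine Finset.sum_comm' (t' := N.powerset) (s' := fun C => C) (h := ?_)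
    intro i C
    simp only [mem_filter, mem_powerset]
    constructor
    · rintro ⟨h1, h2, h3⟩; exact ⟨h3, h2⟩
    · rintro ⟨h1, h2⟩; exact ⟨h2 h1, h2, h1⟩
  rw [hswap, Finset.sum_congr rfl (fun C hC => shapley_eff C v h0)]
  have h2 : (0:ℝ) < 2 ^ N.card := by positivity
  field_simp

lemma avgShapley_symmetricImpact : SymmetricImpact avgShapley :=
  fun _ _ _ _ _ h => avgShapley_symm h

lemma avgShapley_marginalImpact : MarginalImpact avgShapley :=
  fun _ _ _ _ _ _ _ h => avgShapley_congr_MC h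

lemma uGame_empty {T : Finset ℕ} (hT : T.Nonempty) : uGame T ∅ = 0 := by
  unfold uGame
  rw [if_neg]
  rw [Finset.subset_empty]
  exact Finset.nonempty_iff_ne_empty.mp hT

lemma linGame_empty (F : Finset (Finset ℕ)) (c : Finset ℕ → ℝ)
    (hne : ∀ T ∈ F, T.Nonempty) : linGame F c ∅ = 0 := by
  unfold linGame
  refine Finset.sum_eq_zero fun T hT => ?_
  rw [uGame_empty (hne T hT), mul_zero]

lemma dividend_empty (v : Finset ℕ → ℝ) : dividend v ∅ = v ∅ := by
  unfold dividend
  simp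

lemma linGame_eq_on {N : Finset ℕ} (v : Finset ℕ → ℝ) (h0 : v ∅ = 0)
    {C : Finset ℕ} (hC : C ⊆ N) :
    linGame (N.powerset.filter (fun T => T.Nonempty)) (dividend v) C = v C := by
  unfold linGame uGame
  simp only [mul_ite, mul_one, mul_zero]
  rw [← Finset.sum_filter]
  have hfe : (N.powerset.filter (fun T => T.Nonempty)).filter (fun T => T ⊆ C)
      = C.powerset.filter (fun T => T.Nonempty) := by
    ext T
    simp only [mem_filter, mem_powerset]
    constructor
    · rintro ⟨⟨h1, h2⟩, h3⟩; exact ⟨h3, h2⟩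
    · rintro ⟨h1, h2⟩; exact ⟨⟨h1.trans hC, h2⟩, h1⟩
  rw [hfe]
  have hsplit := Finset.sum_filter_add_sum_filter_not C.powerset
    (fun T => T.Nonempty) (dividend v)
  have hnotfil : C.powerset.filter (fun T => ¬ T.Nonempty) = {∅} := by
    ext T
    simp only [mem_filter, mem_powerset, mem_singleton, not_nonempty_iff_eq_empty]
    constructor
    · rintro ⟨_, h⟩; exact h
    · rintro rfl; exact ⟨empty_subset _, rfl⟩
  rw [hnotfil, Finset.sum_singleton, dividend_empty, h0, add_zero, mobius] at hsplit
  exact hsplit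

lemma MC_linGame_filter (F : Finset (Finset ℕ)) (c : Finset ℕ → ℝ) (i : ℕ)
    {C : Finset ℕ} (hiC : i ∉ C) :
    MC (linGame F c) C i = MC (linGame (F.filter (fun T => i ∈ T)) c) C i := by
  unfold MC linGame
  rw [← Finset.sum_sub_distrib, ← Finset.sum_sub_distrib]
  rw [Finset.sum_subset (Finset.filter_subset _ F)]
  intro T hT hTn
  simp only [mem_filter] at hTn
  have hiT : i ∉ T := fun h => hTn ⟨hT, h⟩
  have : uGame T (insert i C) = uGame T C := by
    unfold uGame
    congr 1
    simp only [eq_iff_iff]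
    constructor
    · intro h x hx
      rcases Finset.mem_insert.mp (h hx) with rfl | hh
      · exact absurd hx hiT
      · exact hh
    · intro h; exact h.trans (Finset.subset_insert _ _)
  rw [this, sub_self]

lemma linGame_symmetric {N : Finset ℕ} {F : Finset (Finset ℕ)} {c : Finset ℕ → ℝ}
    {j k : ℕ} (hj : j ∈ N) (hk : k ∈ N)
    (hjT : ∀ T ∈ F, j ∈ T) (hkT : ∀ T ∈ F, k ∈ T) :
    IsSymmetric N (linGame F c) j k := by
  refine ⟨hj, hk, fun C hC => ?_⟩
  rcases eq_or_ne j k with rfl | hjk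
  · rfl
  unfold linGame
  refine Finset.sum_congr rfl fun T hT => ?_
  have hkC : k ∉ C := by
    intro h
    have := hC h
    rw [mem_sdiff, mem_insert, mem_singleton] at this
    exact this.2 (Or.inr rfl)
  have hjC : j ∉ C := by
    intro h
    have := hC h
    rw [mem_sdiff, mem_insert, mem_singleton] at this
    exact this.2 (Or.inl rfl)
  have h1 : uGame T (insert j C) = 0 := by
    unfold uGame
    rw [if_neg]
    intro hsub
    have := hsub (hkT T hT)
    rcases Finset.mem_insert.mp this with h | h
    · exact hjk h.symm
    · exact hkC h
  have h2 : uGame T (insert k C) = 0 := by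
    unfold uGame
    rw [if_neg]
    intro hsub
    have := hsub (hjT T hT)
    rcases Finset.mem_insert.mp this with h | h
    · exact hjk h
    · exact hjC h
  rw [h1, h2]


lemma key_induction (θ : Finset ℕ → (Finset ℕ → ℝ) → ℕ → ℝ)
    (hsym : SymmetricImpact θ) (hav : AverageValue θ) (hmar : MarginalImpact θ)
    (N : Finset ℕ) :
    ∀ m : ℕ, ∀ F : Finset (Finset ℕ), F.card = m → (∀ T ∈ F, T.Nonempty) →
      ∀ c : Finset ℕ → ℝ, ∀ i ∈ N, θ N (linGame F c) i = avgShapley N (linGame F c) i := by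
  intro m
  induction m using Nat.strong_induction_on with
  | _ m ih =>
  intro F hFm hFne c
  have h0F : linGame F c ∅ = 0 := linGame_empty F c hFne
  have star : ∀ j ∈ N, (∃ T ∈ F, j ∉ T) →
      θ N (linGame F c) j = avgShapley N (linGame F c) j := by
    intro j hj hexj
    obtain ⟨T, hTF, hjT⟩ := hexj
    set G := F.filter (fun S => j ∈ S) with hG
    have hsubG : G ⊆ F := filter_subset _ _
    have hGne : ∀ S ∈ G, S.Nonempty := fun S hS => hFne S (hsubG hS)
    have h0G : linGame G c ∅ = 0 := linGame_empty G c hGne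
    have hGlt : G.card < m := by
      rw [← hFm]
      refine card_lt_card ⟨hsubG, fun hFG => ?_⟩
      have := hFG hTF
      rw [hG, mem_filter] at this
      exact hjT this.2
    have hmc : ∀ C ⊆ N \ {j}, MC (linGame F c) C j = MC (linGame G c) C j := by
      intro C hC
      have hjC : j ∉ C := fun h => by
        have := hC h
        rw [mem_sdiff, mem_singleton] at this
        exact this.2 rfl
      exact MC_linGame_filter F c j hjC
    have e1 : θ N (linGame F c) j = θ N (linGame G c) j :=
      hmar N _ _ h0F h0G j hj hmc
    have e2 : avgShapley N (linGame F c) j = avgShapley N (linGame G c) j :=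
      avgShapley_congr_MC hmc
    rw [e1, e2]
    exact ih G.card hGlt G rfl hGne c j hj
  intro i hi
  by_cases hex : ∃ T ∈ F, i ∉ T
  · exact star i hi hex
  push_neg at hex
  set R := N.filter (fun j => ∀ T ∈ F, j ∈ T) with hR
  have hiR : i ∈ R := by rw [hR, mem_filter]; exact ⟨hi, hex⟩
  have hsymR : ∀ j ∈ R, IsSymmetric N (linGame F c) j i := by
    intro j hj
    rw [hR, mem_filter] at hj
    exact linGame_symmetric hj.1 hi hj.2 hex
  have hTR : ∀ j ∈ R, θ N (linGame F c) j = θ N (linGame F c) i :=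
    fun j hj => hsym N _ h0F j i (hsymR j hj)
  have hLR : ∀ j ∈ R, avgShapley N (linGame F c) j = avgShapley N (linGame F c) i :=
    fun j hj => avgShapley_symm (hsymR j hj)
  have hsum : ∑ j ∈ N, θ N (linGame F c) j = ∑ j ∈ N, avgShapley N (linGame F c) j := by
    have ha := hav N _ h0F
    have hb := avgShapley_averageValue N _ h0F
    linarith
  have hNR : ∀ j ∈ N.filter (fun j => ¬ ∀ T ∈ F, j ∈ T),
      θ N (linGame F c) j = avgShapley N (linGame F c) j := by
    intro j hj
    rw [mem_filter] at hj
    have hj2 := hj.2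
    push_neg at hj2
    exact star j hj.1 hj2
  have hsplit1 := Finset.sum_filter_add_sum_filter_not N (fun j => ∀ T ∈ F, j ∈ T)
    (fun j => θ N (linGame F c) j)
  have hsplit2 := Finset.sum_filter_add_sum_filter_not N (fun j => ∀ T ∈ F, j ∈ T)
    (fun j => avgShapley N (linGame F c) j)
  have heq2 : ∑ j ∈ N.filter (fun j => ¬ ∀ T ∈ F, j ∈ T), θ N (linGame F c) j
      = ∑ j ∈ N.filter (fun j => ¬ ∀ T ∈ F, j ∈ T), avgShapley N (linGame F c) j :=
    Finset.sum_congr rfl hNR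
  have hsumR : ∑ j ∈ R, θ N (linGame F c) j = ∑ j ∈ R, avgShapley N (linGame F c) j := by
    rw [hR]
    linarith
  rw [Finset.sum_congr rfl hTR, Finset.sum_congr rfl hLR, sum_const, sum_const,
    nsmul_eq_mul, nsmul_eq_mul] at hsumR
  have hRpos : 0 < R.card := card_pos.mpr ⟨i, hiR⟩
  have hc : (R.card : ℝ) ≠ 0 := Nat.cast_ne_zero.mpr (Nat.pos_iff_ne_zero.mp hRpos)
  exact mul_left_cancel₀ hc hsumR

/-- the Average-Impact value `λ^N_v(i) = φ̄_i(N,v)` is the unique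
measure of average impact satisfying P11 (Symmetric-Impact), P12 (Average-Value)
and P13 (Marginal-Impact). -/
theorem avgImpact_unique :
    (SymmetricImpact avgShapley ∧ AverageValue avgShapley ∧
      MarginalImpact avgShapley) ∧
    ∀ θ : Finset ℕ → (Finset ℕ → ℝ) → ℕ → ℝ,
      SymmetricImpact θ → AverageValue θ → MarginalImpact θ →
      ∀ (N : Finset ℕ) (v : Finset ℕ → ℝ), v ∅ = 0 →
        ∀ i ∈ N, θ N v i = avgShapley N v i := by
  refine ⟨⟨avgShapley_symmetricImpact, avgShapley_averageValue, avgShapley_marginalImpact⟩, ?_⟩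
  intro θ h1 h2 h3 N v h0 i hi
  classical
  set F := N.powerset.filter (fun T => T.Nonempty) with hF
  set w := linGame F (dividend v) with hw
  have hFne : ∀ T ∈ F, T.Nonempty := fun T hT => (mem_filter.mp hT).2
  have h0w : w ∅ = 0 := linGame_empty F _ hFne
  have hmc : ∀ C ⊆ N \ {i}, MC v C i = MC w C i := by
    intro C hC
    have hCN : C ⊆ N := fun x hx => (mem_sdiff.mp (hC hx)).1
    unfold MC
    rw [hw, hF, linGame_eq_on v h0 (insert_subset hi hCN), linGame_eq_on v h0 hCN]
  have e1 : θ N v i = θ N w i := h3 N v w h0 h0w i hi hmc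
  have e2 : avgShapley N w i = avgShapley N v i := (avgShapley_congr_MC hmc).symm
  rw [e1, ← e2]
  exact key_induction θ h1 h2 h3 N F.card F rfl hFne (dividend v) i hi
end
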